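/- Let λ and μ be strict partitions whose parts lie in {1,...,n-1}, such that the set of parts of λ equals the set of parts of μ with the part k-1 replaced by k (for some k with 2 ≤ k ≤ n-1, where k is a part of λ and k-1 is a part of μ, k-1 not a part of λ and k not a part of μ; all other parts agree). Then g_λ · g_{μ'} / (g_{λ'} · g_μ) = n(n-1) - k(k-1), where ν' denotes the complement of ν in {1,...,n-1} and g_ν is given by Schur's formula g_ν = (∏_i ν_i!) ∏_{i<j}(ν_i+ν_j)/∏_{i<j}(ν_i-ν_j). -/

import Mathlib

/-- Schur's expression `g_ν = (∏_i ν_i!) ∏_{i<j}(ν_i+ν_j) / ∏_{i<j}(ν_i-ν_j)`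
for a strict partition `ν` regarded as a finite set of distinct positive integers. -/
def gSchur (nu : Finset ℕ) : ℚ :=
  (∏ a ∈ nu, (Nat.factorial a : ℚ)) *
    ∏ p ∈ nu.offDiag.filter (fun p => p.2 < p.1),
      (((p.1 : ℚ) + (p.2 : ℚ)) / ((p.1 : ℚ) - (p.2 : ℚ)))

/-- The complement of a strict partition with parts in `{1, …, n-1}`. -/
def strictComplement (n : ℕ) (lam : Finset ℕ) : Finset ℕ :=
  Finset.Icc 1 (n - 1) \ lam

namespace GSchurAux

open Finset

/-- The elementary factor appearing in the product. -/
def Fq (p : ℕ × ℕ) : ℚ := ((p.1 : ℚ) + (p.2 : ℚ)) / ((p.1 : ℚ) - (p.2 : ℚ))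

/-- The one-variable ratio factor. -/
def fk (k s : ℕ) : ℚ :=
  (((k : ℚ) + s) * ((k : ℚ) - 1 - s)) / (((k : ℚ) - s) * ((k : ℚ) - 1 + s))

lemma gSchur_ne_zero (nu : Finset ℕ) : gSchur nu ≠ 0 := by
  unfold gSchur
  apply mul_ne_zero
  · exact Finset.prod_ne_zero_iff.2 fun a _ => Nat.cast_ne_zero.2 a.factorial_ne_zero
  · refine Finset.prod_ne_zero_iff.2 fun p hp => ?_
    simp only [mem_filter, mem_offDiag] at hp
    obtain ⟨⟨h1, h2, hne⟩, hlt⟩ := hp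
    apply div_ne_zero
    · have h0 : 0 < p.1 := lt_of_le_of_lt (Nat.zero_le _) hlt
      have : (0 : ℚ) < (p.1 : ℚ) := by exact_mod_cast h0
      have : (0 : ℚ) ≤ (p.2 : ℚ) := by positivity
      positivity
    · have : (p.1 : ℚ) ≠ (p.2 : ℚ) := by exact_mod_cast hne
      exact sub_ne_zero.2 this

lemma prod_offDiag_insert (t : ℕ) (S : Finset ℕ) (ht : t ∉ S) :
    ∏ p ∈ (insert t S).offDiag.filter (fun p => p.2 < p.1), Fq p
      = (∏ p ∈ S.offDiag.filter (fun p => p.2 < p.1), Fq p)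
        * ∏ s ∈ S, (if s < t then Fq (t, s) else Fq (s, t)) := by
  have hset : (insert t S).offDiag.filter (fun p => p.2 < p.1)
      = (S.offDiag.filter (fun p => p.2 < p.1))
        ∪ ((S.filter (· < t)).image (fun s => (t, s)))
        ∪ ((S.filter (fun s => ¬ s < t)).image (fun s => (s, t))) := by
    ext ⟨a, b⟩
    simp only [mem_filter, mem_offDiag, mem_union, mem_insert, mem_image]
    constructor
    · rintro ⟨⟨ha, hb, hne⟩, hlt⟩
      rcases ha with rfl | ha
      · rcases hb with rfl | hb
        · omega
        · exact Or.inl (Or.inr ⟨b, ⟨hb, hlt⟩, rfl⟩)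
      · rcases hb with rfl | hb
        · refine Or.inr ⟨a, ⟨ha, by omega⟩, rfl⟩
        · exact Or.inl (Or.inl ⟨⟨ha, hb, hne⟩, hlt⟩)
    · rintro ((⟨⟨ha, hb, hne⟩, hlt⟩ | ⟨s, ⟨hs, hst⟩, heq⟩) | ⟨s, ⟨hs, hst⟩, heq⟩)
      · exact ⟨⟨Or.inr ha, Or.inr hb, hne⟩, hlt⟩
      · obtain ⟨rfl, rfl⟩ := Prod.mk.injEq .. ▸ heq
        exact ⟨⟨Or.inl rfl, Or.inr hs, fun h => ht (h ▸ hs)⟩, hst⟩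
      · obtain ⟨rfl, rfl⟩ := Prod.mk.injEq .. ▸ heq
        refine ⟨⟨Or.inr hs, Or.inl rfl, fun h => ht (h ▸ hs)⟩, ?_⟩
        have : s ≠ t := fun h => ht (h ▸ hs)
        omega
  rw [hset]
  have hinj1 : Set.InjOn (fun s : ℕ => (t, s)) (S.filter (· < t)) := by
    intro a _ b _ h; simpa using h
  have hinj2 : Set.InjOn (fun s : ℕ => (s, t)) (S.filter (fun s => ¬ s < t)) := by
    intro a _ b _ h; simpa using h
  have hd1 : Disjoint (S.offDiag.filter (fun p => p.2 < p.1))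
      ((S.filter (· < t)).image (fun s => (t, s))) := by
    rw [Finset.disjoint_left]
    rintro ⟨a, b⟩ hp hq
    simp only [mem_filter, mem_offDiag] at hp
    simp only [mem_image] at hq
    obtain ⟨s, _, heq⟩ := hq
    obtain ⟨rfl, rfl⟩ := Prod.mk.injEq .. ▸ heq
    exact ht hp.1.1
  have hd2 : Disjoint ((S.offDiag.filter (fun p => p.2 < p.1))
      ∪ ((S.filter (· < t)).image (fun s => (t, s))))
      ((S.filter (fun s => ¬ s < t)).image (fun s => (s, t))) := by
    rw [Finset.disjoint_left]
    rintro ⟨a, b⟩ hp hq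
    simp only [mem_image] at hq
    obtain ⟨s, _, heq⟩ := hq
    obtain ⟨rfl, rfl⟩ := Prod.mk.injEq .. ▸ heq
    simp only [mem_union, mem_filter, mem_offDiag, mem_image] at hp
    rcases hp with ⟨⟨_, hb, _⟩, _⟩ | ⟨u, hu, heq2⟩
    · exact ht hb
    · obtain ⟨h1, h2⟩ := Prod.mk.injEq .. ▸ heq2
      obtain ⟨_, hu2⟩ := hu
      omega
  rw [Finset.prod_union hd2, Finset.prod_union hd1,
    Finset.prod_image (fun a ha b hb h => hinj1 ha hb h),
    Finset.prod_image (fun a ha b hb h => hinj2 ha hb h)]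
  rw [Finset.prod_ite]
  ring

lemma gSchur_insert (t : ℕ) (S : Finset ℕ) (ht : t ∉ S) :
    gSchur (insert t S)
      = (t.factorial : ℚ) * (∏ s ∈ S, (if s < t then Fq (t, s) else Fq (s, t)))
        * gSchur S := by
  unfold gSchur
  rw [Finset.prod_insert ht]
  have := prod_offDiag_insert t S ht
  unfold Fq at this
  rw [this]
  unfold Fq
  ring

lemma key_ratio (k : ℕ) (hk : 2 ≤ k) (S : Finset ℕ) (hkS : k ∉ S) (hk1S : k - 1 ∉ S) :
    gSchur (insert k S)
      = gSchur (insert (k - 1) S) * ((k : ℚ) * ∏ s ∈ S, fk k s) := by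
  rw [gSchur_insert k S hkS, gSchur_insert (k - 1) S hk1S]
  have hfac : (k.factorial : ℚ) = (k : ℚ) * ((k - 1).factorial : ℚ) := by
    have h1 : k = (k - 1) + 1 := by omega
    rw [h1, Nat.factorial_succ]
    push_cast
    ring
  rw [hfac]
  have hcast : ((k - 1 : ℕ) : ℚ) = (k : ℚ) - 1 :=
    Nat.cast_sub (by omega)
  have hprod : ∏ s ∈ S, (if s < k then Fq (k, s) else Fq (s, k))
      = ∏ s ∈ S, ((if s < k - 1 then Fq (k - 1, s) else Fq (s, k - 1)) * fk k s) := by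
    apply Finset.prod_congr rfl
    intro s hs
    have hsk : s ≠ k := fun h => hkS (h ▸ hs)
    have hsk1 : s ≠ k - 1 := fun h => hk1S (h ▸ hs)
    have hkQ : (2 : ℚ) ≤ (k : ℚ) := by exact_mod_cast hk
    rcases lt_or_gt_of_ne hsk1 with h | h
    · -- s < k - 1
      have h1 : s < k := by omega
      have h2 : s < k - 1 := h
      simp only [if_pos h1, if_pos h2]
      unfold Fq fk
      simp only [hcast]
      have hsQ : (s : ℚ) < (k : ℚ) - 1 := by
        have : s + 1 < k := by omega
        have := (Nat.cast_lt (α := ℚ)).2 this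
        push_cast at this
        linarith
      have d1 : (k : ℚ) - s ≠ 0 := by linarith
      have d2 : (k : ℚ) - 1 - s ≠ 0 := by linarith
      have d3 : (k : ℚ) - 1 + s ≠ 0 := by
        have : (0:ℚ) ≤ (s:ℚ) := by positivity
        linarith
      field_simp
    · -- s > k, since s ≠ k and s > k - 1
      have h1 : ¬ s < k := by omega
      have h2 : ¬ s < k - 1 := by omega
      simp only [if_neg h1, if_neg h2]
      unfold Fq fk
      simp only [hcast]
      have hsQ : (k : ℚ) < (s : ℚ) := by
        have : k < s := by omega
        exact_mod_cast this
      have d1 : (s : ℚ) - k ≠ 0 := by linarith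
      have d2 : (s : ℚ) - ((k : ℚ) - 1) ≠ 0 := by linarith
      have d3 : (k : ℚ) - 1 + s ≠ 0 := by linarith
      have d4 : (k : ℚ) - s ≠ 0 := by linarith
      have d5 : (k : ℚ) - 1 - s ≠ 0 := by linarith
      field_simp
      ring
  rw [hprod, Finset.prod_mul_distrib]
  ring

lemma prod_fk_small (k : ℕ) (hk : 2 ≤ k) :
    ∀ m, m ≤ k - 2 → ∏ s ∈ Finset.Icc 1 m, fk k s
      = ((k : ℚ) + m) * ((k : ℚ) - 1 - m) / ((k : ℚ) * ((k : ℚ) - 1)) := by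
  intro m
  induction m with
  | zero =>
    intro _
    simp only [Nat.cast_zero, add_zero, sub_zero]
    rw [show Finset.Icc 1 0 = (∅ : Finset ℕ) by simp]
    have hkQ : (2 : ℚ) ≤ (k : ℚ) := by exact_mod_cast hk
    have d1 : (k : ℚ) ≠ 0 := by linarith
    have d2 : (k : ℚ) - 1 ≠ 0 := by linarith
    field_simp
    exact Finset.prod_empty
  | succ m ih =>
    intro hm
    have hm' : m ≤ k - 2 := by omega
    have hicc : Finset.Icc 1 (m + 1) = insert (m + 1) (Finset.Icc 1 m) := by
      ext a; simp only [Finset.mem_Icc, Finset.mem_insert]; omega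
    rw [hicc, Finset.prod_insert (by simp), ih hm']
    unfold fk
    have hkQ : (2 : ℚ) ≤ (k : ℚ) := by exact_mod_cast hk
    have hmQ : (m : ℚ) + 1 ≤ (k : ℚ) - 2 := by
      have : m + 1 + 2 ≤ k := by omega
      have := (Nat.cast_le (α := ℚ)).2 this
      push_cast at this
      linarith
    have d1 : (k : ℚ) - (m + 1) ≠ 0 := by push_cast; intro h; nlinarith [h]
    have hm0 : (0 : ℚ) ≤ (m : ℚ) := by positivity
    have d2 : (k : ℚ) - 1 + ((m : ℚ) + 1) ≠ 0 := by intro h; nlinarith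
    have d3 : (k : ℚ) ≠ 0 := by linarith
    have d4 : (k : ℚ) - 1 ≠ 0 := by linarith
    have d5 : (k : ℚ) - 1 - m ≠ 0 := by
      have : (0:ℚ) ≤ (m:ℚ) := by positivity
      intro h; nlinarith [h]
    push_cast
    push_cast at d1 d2
    field_simp
    ring

lemma prod_fk_full (n k : ℕ) (hk : 2 ≤ k) (hkn : k ≤ n - 1) (hn : 3 ≤ n) :
    ∏ s ∈ Finset.Icc 1 (n - 1) \ {k - 1, k}, fk k s
      = (((n : ℚ) - 1) + k) * ((n : ℚ) - k) / (k : ℚ) ^ 2 := by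
  obtain ⟨m, rfl⟩ : ∃ m, n = m + 1 := ⟨n - 1, by omega⟩
  simp only [Nat.add_sub_cancel] at hkn ⊢
  push_cast
  have : ∀ m, k ≤ m → ∏ s ∈ Finset.Icc 1 m \ {k - 1, k}, fk k s
      = ((m : ℚ) + k) * ((m : ℚ) + 1 - k) / (k : ℚ) ^ 2 := by
    intro m
    induction m with
    | zero => omega
    | succ m ih =>
      intro hm
      have hkQ : (2 : ℚ) ≤ (k : ℚ) := by exact_mod_cast hk
      rcases Nat.eq_or_lt_of_le hm with heq | hlt
      · -- base case m + 1 = k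
        subst heq
        have hset : Finset.Icc 1 (m + 1) \ {m + 1 - 1, m + 1} = Finset.Icc 1 (m - 1) := by
          ext a
          simp only [Finset.mem_sdiff, Finset.mem_Icc, Finset.mem_insert,
            Finset.mem_singleton]
          omega
        rw [hset]
        have hm1 : m - 1 ≤ (m + 1) - 2 := by omega
        rw [prod_fk_small (m + 1) hk (m - 1) hm1]
        have hm2 : 1 ≤ m := by omega
        have hcast : ((m - 1 : ℕ) : ℚ) = (m : ℚ) - 1 :=
          Nat.cast_sub hm2
        rw [hcast]
        push_cast
        have hmQ : (1 : ℚ) ≤ (m : ℚ) := by exact_mod_cast hm2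
        have d3 : (m : ℚ) + 1 ≠ 0 := by linarith
        have d4 : (m : ℚ) ≠ 0 := by linarith
        field_simp
        ring
        rw [mul_inv_cancel₀ d4, one_mul]
      · -- inductive step: k ≤ m
        have hkm : k ≤ m := by omega
        have hset : Finset.Icc 1 (m + 1) \ {k - 1, k}
            = insert (m + 1) (Finset.Icc 1 m \ {k - 1, k}) := by
          ext a
          simp only [Finset.mem_sdiff, Finset.mem_Icc, Finset.mem_insert,
            Finset.mem_singleton]
          omega
        have hnotmem : m + 1 ∉ Finset.Icc 1 m \ {k - 1, k} := by
          simp only [Finset.mem_sdiff, Finset.mem_Icc]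
          omega
        rw [hset, Finset.prod_insert hnotmem, ih hkm]
        unfold fk
        have hmQ : (k : ℚ) ≤ (m : ℚ) := by exact_mod_cast hkm
        have d1 : (k : ℚ) - (m + 1) ≠ 0 := by push_cast; intro h; nlinarith [h]
        have d2 : (k : ℚ) - 1 + (m + 1) ≠ 0 := by push_cast; nlinarith
        have d3 : (k : ℚ) ≠ 0 := by linarith
        push_cast
        push_cast at d1 d2
        field_simp
        ring
  rw [this m hkn]
  ring

end GSchurAux

open GSchurAux Finset in
/-- If the strict partitions `λ` and `μ`, with parts in `{1, …, n-1}`, differ by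
changing one part from `k` to `k-1` (with `2 ≤ k ≤ n-1`), then
`g_λ g_{μ'} / (g_{λ'} g_μ) = n(n-1) - k(k-1)`. -/
theorem gSchur_ratio_lower_part (n k : ℕ) (lam mu : Finset ℕ)
    (hlam : lam ⊆ Finset.Icc 1 (n - 1)) (hmu : mu ⊆ Finset.Icc 1 (n - 1))
    (hk2 : 2 ≤ k) (hkn : k ≤ n - 1)
    (hkl : k ∈ lam) (hkl' : k - 1 ∉ lam) (hkm : k ∉ mu) (hkm' : k - 1 ∈ mu)
    (hmueq : mu = insert (k - 1) (lam.erase k)) :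
    gSchur lam * gSchur (strictComplement n mu) /
        (gSchur (strictComplement n lam) * gSchur mu)
      = (n : ℚ) * ((n : ℚ) - 1) - (k : ℚ) * ((k : ℚ) - 1) := by
  have hn3 : 3 ≤ n := by
    have := Finset.mem_Icc.1 (hlam hkl)
    omega
  set S := lam.erase k with hS
  have hlameq : lam = insert k S := (Finset.insert_erase hkl).symm
  have hkS : k ∉ S := Finset.notMem_erase k lam
  have hk1S : k - 1 ∉ S := fun h => hkl' (Finset.erase_subset k lam h)
  have hSsub : S ⊆ Finset.Icc 1 (n - 1) := (Finset.erase_subset k lam).trans hlam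
  set C := Finset.Icc 1 (n - 1) \ insert (k - 1) (insert k S) with hC
  have hkC : k ∉ C := by simp [hC]
  have hk1C : k - 1 ∉ C := by simp [hC]
  have hcompLam : strictComplement n lam = insert (k - 1) C := by
    ext a
    simp only [strictComplement, hC, hlameq, Finset.mem_sdiff, Finset.mem_insert,
      Finset.mem_Icc]
    constructor
    · rintro ⟨ha, hb⟩
      by_cases h : a = k - 1
      · exact Or.inl h
      · exact Or.inr ⟨ha, by tauto⟩
    · rintro (rfl | ⟨ha, hb⟩)
      · refine ⟨⟨by omega, by omega⟩, ?_⟩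
        rintro (h | h)
        · omega
        · exact hk1S h
      · exact ⟨ha, by tauto⟩
  have hcompMu : strictComplement n mu = insert k C := by
    ext a
    simp only [strictComplement, hC, hmueq, Finset.mem_sdiff, Finset.mem_insert,
      Finset.mem_Icc]
    constructor
    · rintro ⟨ha, hb⟩
      by_cases h : a = k
      · exact Or.inl h
      · exact Or.inr ⟨ha, by tauto⟩
    · rintro (rfl | ⟨ha, hb⟩)
      · refine ⟨⟨by omega, by omega⟩, ?_⟩
        rintro (h | h)
        · omega
        · exact hkS h
      · exact ⟨ha, by tauto⟩
  have hdisj : Disjoint S C := by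
    rw [Finset.disjoint_left]
    intro a ha hb
    simp only [hC, Finset.mem_sdiff, Finset.mem_insert] at hb
    exact hb.2 (Or.inr (Or.inr ha))
  have hunion : S ∪ C = Finset.Icc 1 (n - 1) \ {k - 1, k} := by
    ext a
    simp only [Finset.mem_union, hC, Finset.mem_sdiff, Finset.mem_insert,
      Finset.mem_singleton, Finset.mem_Icc]
    constructor
    · rintro (ha | ⟨ha, hb⟩)
      · refine ⟨Finset.mem_Icc.1 (hSsub ha), ?_⟩
        rintro (h | h)
        · exact hk1S (h ▸ ha)
        · exact hkS (h ▸ ha)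
      · exact ⟨ha, fun h => hb (by tauto)⟩
    · rintro ⟨ha, hb⟩
      by_cases h : a ∈ S
      · exact Or.inl h
      · exact Or.inr ⟨ha, by tauto⟩
  have e1 : gSchur lam = gSchur mu * ((k : ℚ) * ∏ s ∈ S, fk k s) := by
    rw [hlameq, hmueq, key_ratio k hk2 S hkS hk1S]
  have e2 : gSchur (strictComplement n mu)
      = gSchur (strictComplement n lam) * ((k : ℚ) * ∏ s ∈ C, fk k s) := by
    rw [hcompMu, hcompLam, key_ratio k hk2 C hkC hk1C]
  rw [e1, e2]
  have h1 : gSchur mu ≠ 0 := gSchur_ne_zero mu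
  have h2 : gSchur (strictComplement n lam) ≠ 0 := gSchur_ne_zero _
  have hprod : (∏ s ∈ S, fk k s) * (∏ s ∈ C, fk k s)
      = (((n : ℚ) - 1) + k) * ((n : ℚ) - k) / (k : ℚ) ^ 2 := by
    rw [← Finset.prod_union hdisj, hunion, prod_fk_full n k hk2 hkn hn3]
  have hkQ : (2 : ℚ) ≤ (k : ℚ) := by exact_mod_cast hk2
  have hkne : (k : ℚ) ≠ 0 := by linarith
  field_simp
  rw [mul_assoc, hprod, mul_div_assoc', mul_div_cancel_left₀ _ (pow_ne_zero 2 hkne)]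
  ring
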